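/- arXiv:2602.10415 — 3 statements merged into one kernel-verified Lean document; each statement's English description precedes it below -/
import Mathlib

section
/- (Basic LASSO inequality.) Let Q_0 : ℝ^d → ℝ be defined by Q_0(b) = (1/n) Σ_{t=1}^n ‖y_t − Z_t^⊤ b‖₂² for data y_t ∈ ℝ^m, matrices Z_t ∈ ℝ^{d×m}, and suppose y_t = Z_t^⊤ β₀ + u_t. Let β̂ minimize Q_0(b) + γ‖b‖₁. If ‖(1/n) Σ_t Z_t u_t‖_∞ ≤ γ/4, then (1/n) Σ_{t=1}^n ‖Z_t^⊤(β₀ − β̂)‖₂² + (γ/2)‖(β₀ − β̂)_{S^c}‖₁ ≤ (3γ/2)‖(β₀ − β̂)_S‖₁, where S is the support of β₀. In particular, β₀ − β̂ lies in the cone {a : ‖a_{S^c}‖₁ ≤ 3‖a_S‖₁}. -/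
open Matrix

/-- basic LASSO inequality: if `β̂` minimizes
`(1/n)∑_t‖y_t − Z_t^⊤b‖₂² + γ‖b‖₁`, `y_t = Z_t^⊤β₀ + u_t`, and
`‖(1/n)∑_t Z_t u_t‖_∞ ≤ γ/4`, then
`(1/n)∑_t‖Z_t^⊤(β₀−β̂)‖₂² + (γ/2)‖(β₀−β̂)_{S^c}‖₁ ≤ (3γ/2)‖(β₀−β̂)_S‖₁`,
where `S = supp(β₀)`; in particular `β₀ − β̂` lies in the cone
`{a : ‖a_{S^c}‖₁ ≤ 3‖a_S‖₁}`. -/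
theorem stmt10 {n m d : ℕ} (hn : 0 < n)
    (y : Fin n → Fin m → ℝ) (Z : Fin n → Matrix (Fin d) (Fin m) ℝ)
    (u : Fin n → Fin m → ℝ) (β₀ βhat : Fin d → ℝ) (γ : ℝ) (hγ : 0 < γ)
    (S : Finset (Fin d)) (hS : ∀ i, i ∈ S ↔ β₀ i ≠ 0)
    (hmodel : ∀ t, y t = Matrix.vecMul β₀ (Z t) + u t)
    (hmin : ∀ b : Fin d → ℝ,
      (1 / (n : ℝ)) * ∑ t, ∑ j, (y t j - Matrix.vecMul βhat (Z t) j) ^ 2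
          + γ * ∑ i, |βhat i|
        ≤ (1 / (n : ℝ)) * ∑ t, ∑ j, (y t j - Matrix.vecMul b (Z t) j) ^ 2
          + γ * ∑ i, |b i|)
    (hdual : ∀ i, |(1 / (n : ℝ)) * ∑ t, ((Z t) *ᵥ (u t)) i| ≤ γ / 4) :
    ((1 / (n : ℝ)) * ∑ t, ∑ j, (Matrix.vecMul (β₀ - βhat) (Z t) j) ^ 2
        + (γ / 2) * ∑ i ∈ Sᶜ, |β₀ i - βhat i|
      ≤ (3 * γ / 2) * ∑ i ∈ S, |β₀ i - βhat i|) ∧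
    (∑ i ∈ Sᶜ, |β₀ i - βhat i| ≤ 3 * ∑ i ∈ S, |β₀ i - βhat i|) := by
  have hn' : (0:ℝ) < n := by exact_mod_cast hn
  set T : ℝ := (1 / (n : ℝ)) * ∑ t, ∑ j, (Matrix.vecMul (β₀ - βhat) (Z t) j) ^ 2 with hTdef
  have hT0 : 0 ≤ T := by
    apply mul_nonneg (by positivity)
    exact Finset.sum_nonneg fun t _ => Finset.sum_nonneg fun j _ => sq_nonneg _
  -- residual identities
  have hres : ∀ t j, y t j - Matrix.vecMul βhat (Z t) j
      = Matrix.vecMul (β₀ - βhat) (Z t) j + u t j := by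
    intro t j
    rw [hmodel t]
    simp [Matrix.sub_vecMul]
    ring
  have hres0 : ∀ t j, y t j - Matrix.vecMul β₀ (Z t) j = u t j := by
    intro t j; rw [hmodel t]; simp
  -- cross term rearrangement
  have hcross : ∀ t, ∑ j, Matrix.vecMul (β₀ - βhat) (Z t) j * u t j
      = ∑ i, (β₀ i - βhat i) * ((Z t) *ᵥ (u t)) i := by
    intro t
    simp only [Matrix.vecMul, Matrix.mulVec, dotProduct, Pi.sub_apply,
      Finset.sum_mul, Finset.mul_sum, mul_assoc]
    exact Finset.sum_comm
  -- expansion per t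
  have expand : ∀ t, ∑ j, (y t j - Matrix.vecMul βhat (Z t) j) ^ 2
      = ∑ j, (Matrix.vecMul (β₀ - βhat) (Z t) j) ^ 2
        + 2 * ∑ i, (β₀ i - βhat i) * ((Z t) *ᵥ (u t)) i
        + ∑ j, (u t j) ^ 2 := by
    intro t
    rw [← hcross t, Finset.mul_sum, ← Finset.sum_add_distrib, ← Finset.sum_add_distrib]
    apply Finset.sum_congr rfl
    intro j _
    rw [hres]
    ring
  -- total expansion
  have expand' : ∑ t, ∑ j, (y t j - Matrix.vecMul βhat (Z t) j) ^ 2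
      = ∑ t, ∑ j, (Matrix.vecMul (β₀ - βhat) (Z t) j) ^ 2
        + 2 * ∑ i, (β₀ i - βhat i) * ∑ t, ((Z t) *ᵥ (u t)) i
        + ∑ t, ∑ j, (u t j) ^ 2 := by
    calc ∑ t, ∑ j, (y t j - Matrix.vecMul βhat (Z t) j) ^ 2
        = ∑ t, (∑ j, (Matrix.vecMul (β₀ - βhat) (Z t) j) ^ 2
            + 2 * ∑ i, (β₀ i - βhat i) * ((Z t) *ᵥ (u t)) i
            + ∑ j, (u t j) ^ 2) := Finset.sum_congr rfl fun t _ => expand t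
      _ = ∑ t, ∑ j, (Matrix.vecMul (β₀ - βhat) (Z t) j) ^ 2
            + 2 * ∑ t, ∑ i, (β₀ i - βhat i) * ((Z t) *ᵥ (u t)) i
            + ∑ t, ∑ j, (u t j) ^ 2 := by
          rw [Finset.sum_add_distrib, Finset.sum_add_distrib, ← Finset.mul_sum]
      _ = _ := by
          congr 1
          congr 1
          congr 1
          rw [Finset.sum_comm]
          apply Finset.sum_congr rfl
          intro i _
          rw [Finset.mul_sum]
  -- basic inequality
  have hbasic : T + 2 * ∑ i, (β₀ i - βhat i) * ((1 / (n:ℝ)) * ∑ t, ((Z t) *ᵥ (u t)) i)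
      ≤ γ * ∑ i, |β₀ i| - γ * ∑ i, |βhat i| := by
    have h := hmin β₀
    simp only [hres0] at h
    rw [expand'] at h
    have hre : ∑ i, (β₀ i - βhat i) * ((1 / (n:ℝ)) * ∑ t, ((Z t) *ᵥ (u t)) i)
        = (1 / (n:ℝ)) * ∑ i, (β₀ i - βhat i) * ∑ t, ((Z t) *ᵥ (u t)) i := by
      rw [Finset.mul_sum]
      apply Finset.sum_congr rfl
      intro i _
      ring
    rw [hre]
    rw [hTdef]
    nlinarith [h]
  -- dual bound
  have habs : |∑ i, (β₀ i - βhat i) * ((1 / (n:ℝ)) * ∑ t, ((Z t) *ᵥ (u t)) i)|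
      ≤ (γ / 4) * ∑ i, |β₀ i - βhat i| := by
    calc |∑ i, (β₀ i - βhat i) * ((1 / (n:ℝ)) * ∑ t, ((Z t) *ᵥ (u t)) i)|
        ≤ ∑ i, |(β₀ i - βhat i) * ((1 / (n:ℝ)) * ∑ t, ((Z t) *ᵥ (u t)) i)| :=
          Finset.abs_sum_le_sum_abs _ _
      _ ≤ ∑ i, |β₀ i - βhat i| * (γ / 4) := by
          apply Finset.sum_le_sum
          intro i _
          rw [abs_mul]
          exact mul_le_mul_of_nonneg_left (hdual i) (abs_nonneg _)
      _ = (γ / 4) * ∑ i, |β₀ i - βhat i| := by rw [← Finset.sum_mul]; ring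
  -- triangle on the support
  have hzero : ∀ i ∈ Sᶜ, β₀ i = 0 := by
    intro i hi
    by_contra h
    exact (Finset.mem_compl.mp hi) ((hS i).mpr h)
  have hsplit : ∀ f : Fin d → ℝ, ∑ i, f i = ∑ i ∈ S, f i + ∑ i ∈ Sᶜ, f i := by
    intro f
    rw [Finset.sum_add_sum_compl]
  have htri : ∑ i, |β₀ i| - ∑ i, |βhat i| + ∑ i, |β₀ i - βhat i|
      ≤ 2 * ∑ i ∈ S, |β₀ i - βhat i| := by
    rw [hsplit (fun i => |β₀ i|), hsplit (fun i => |βhat i|),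
      hsplit (fun i => |β₀ i - βhat i|)]
    have h1 : ∑ i ∈ Sᶜ, |β₀ i| = 0 :=
      Finset.sum_eq_zero fun i hi => by rw [hzero i hi, abs_zero]
    have h2 : ∑ i ∈ Sᶜ, |β₀ i - βhat i| = ∑ i ∈ Sᶜ, |βhat i| :=
      Finset.sum_congr rfl fun i hi => by rw [hzero i hi, zero_sub, abs_neg]
    have h3 : ∑ i ∈ S, |β₀ i| - ∑ i ∈ S, |βhat i| ≤ ∑ i ∈ S, |β₀ i - βhat i| := by
      rw [← Finset.sum_sub_distrib]
      exact Finset.sum_le_sum fun i _ => abs_sub_abs_le_abs_sub _ _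
    linarith
  -- combine
  have hΔsplit : ∑ i, |β₀ i - βhat i|
      = ∑ i ∈ S, |β₀ i - βhat i| + ∑ i ∈ Sᶜ, |β₀ i - βhat i| :=
    hsplit _
  have hbound : -(2 * ∑ i, (β₀ i - βhat i) * ((1 / (n:ℝ)) * ∑ t, ((Z t) *ᵥ (u t)) i))
      ≤ (γ / 2) * ∑ i, |β₀ i - βhat i| := by
    have := neg_abs_le (∑ i, (β₀ i - βhat i) * ((1 / (n:ℝ)) * ∑ t, ((Z t) *ᵥ (u t)) i))
    linarith
  have key : T + (γ / 2) * ∑ i ∈ Sᶜ, |β₀ i - βhat i|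
      ≤ (3 * γ / 2) * ∑ i ∈ S, |β₀ i - βhat i| := by
    have h5 : γ * (∑ i, |β₀ i| - ∑ i, |βhat i| + ∑ i, |β₀ i - βhat i|)
        ≤ γ * (2 * ∑ i ∈ S, |β₀ i - βhat i|) :=
      mul_le_mul_of_nonneg_left htri hγ.le
    nlinarith [hbasic, hbound, hΔsplit]
  refine ⟨key, ?_⟩
  have : (γ / 2) * ∑ i ∈ Sᶜ, |β₀ i - βhat i| ≤ (3 * γ / 2) * ∑ i ∈ S, |β₀ i - βhat i| := by
    linarith
  nlinarith [this]
end

section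
/- (LASSO L2 and L1 error bounds under restricted eigenvalue.) In the setting of the basic LASSO inequality, suppose additionally that for every a in the cone {a : ‖a_{S^c}‖₁ ≤ 3‖a_S‖₁} one has (1/n) Σ_{t=1}^n ‖Z_t^⊤ a‖₂² ≥ (α/2) ‖a‖₂² for some α > 0. Then ‖β₀ − β̂‖₂ ≤ 3γ√s/α and ‖β₀ − β̂‖₁ ≤ 12γ s/α, where s = |S|. -/
open Matrix

set_option maxHeartbeats 1000000 in
/-- LASSO ℓ₂/ℓ₁ error bounds under a restricted eigenvalue condition:
in the basic LASSO setting, if additionally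
`(1/n)∑_t‖Z_t^⊤a‖₂² ≥ (α/2)‖a‖₂²` for every `a` in the cone
`{a : ‖a_{S^c}‖₁ ≤ 3‖a_S‖₁}`, then `‖β₀−β̂‖₂ ≤ 3γ√s/α` and `‖β₀−β̂‖₁ ≤ 12γs/α`,
where `s = |S|`. -/
theorem stmt11 {n m d : ℕ} (hn : 0 < n)
    (y : Fin n → Fin m → ℝ) (Z : Fin n → Matrix (Fin d) (Fin m) ℝ)
    (u : Fin n → Fin m → ℝ) (β₀ βhat : Fin d → ℝ) (γ α : ℝ) (hγ : 0 < γ) (hα : 0 < α)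
    (S : Finset (Fin d)) (hS : ∀ i, i ∈ S ↔ β₀ i ≠ 0)
    (hmodel : ∀ t, y t = Matrix.vecMul β₀ (Z t) + u t)
    (hmin : ∀ b : Fin d → ℝ,
      (1 / (n : ℝ)) * ∑ t, ∑ j, (y t j - Matrix.vecMul βhat (Z t) j) ^ 2
          + γ * ∑ i, |βhat i|
        ≤ (1 / (n : ℝ)) * ∑ t, ∑ j, (y t j - Matrix.vecMul b (Z t) j) ^ 2
          + γ * ∑ i, |b i|)
    (hdual : ∀ i, |(1 / (n : ℝ)) * ∑ t, ((Z t) *ᵥ (u t)) i| ≤ γ / 4)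
    (hRE : ∀ a : Fin d → ℝ, (∑ i ∈ Sᶜ, |a i| ≤ 3 * ∑ i ∈ S, |a i|) →
      (α / 2) * ∑ i, (a i) ^ 2
        ≤ (1 / (n : ℝ)) * ∑ t, ∑ j, (Matrix.vecMul a (Z t) j) ^ 2) :
    Real.sqrt (∑ i, (β₀ i - βhat i) ^ 2) ≤ 3 * γ * Real.sqrt (S.card) / α ∧
    ∑ i, |β₀ i - βhat i| ≤ 12 * γ * S.card / α := by
  classical
  set D : Fin d → ℝ := fun i => β₀ i - βhat i with hDdef
  have hNn : (0:ℝ) < (1 / (n:ℝ)) := by positivity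
  have hvD : ∀ t j, Matrix.vecMul D (Z t) j
      = Matrix.vecMul β₀ (Z t) j - Matrix.vecMul βhat (Z t) j := by
    intro t j
    simp only [Matrix.vecMul, dotProduct, hDdef]
    rw [← Finset.sum_sub_distrib]
    congr 1; funext i; ring
  have hresid : ∀ t j, y t j - Matrix.vecMul βhat (Z t) j
      = Matrix.vecMul D (Z t) j + u t j := by
    intro t j
    rw [hvD, hmodel t]; simp [Pi.add_apply]; ring
  have hresid0 : ∀ t j, y t j - Matrix.vecMul β₀ (Z t) j = u t j := by
    intro t j; rw [hmodel t]; simp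
  -- quantities
  set V : ℝ := (1 / (n:ℝ)) * ∑ t, ∑ j, (Matrix.vecMul D (Z t) j) ^ 2 with hVdef
  set C : ℝ := (1 / (n:ℝ)) * ∑ t, ∑ j, Matrix.vecMul D (Z t) j * u t j with hCdef
  have hVnonneg : 0 ≤ V := by
    apply mul_nonneg (le_of_lt hNn)
    apply Finset.sum_nonneg; intro t _
    exact Finset.sum_nonneg fun j _ => sq_nonneg _
  -- expansion identity
  have hexpand : (1 / (n:ℝ)) * ∑ t, ∑ j, (y t j - Matrix.vecMul βhat (Z t) j) ^ 2
      = (1 / (n:ℝ)) * ∑ t, ∑ j, (y t j - Matrix.vecMul β₀ (Z t) j) ^ 2 + V + 2 * C := by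
    have h1 : ∀ t j, (y t j - Matrix.vecMul βhat (Z t) j) ^ 2
        = (y t j - Matrix.vecMul β₀ (Z t) j) ^ 2
          + (Matrix.vecMul D (Z t) j) ^ 2 + 2 * (Matrix.vecMul D (Z t) j * u t j) := by
      intro t j; rw [hresid, hresid0]; ring
    simp only [h1, Finset.sum_add_distrib, mul_add, hVdef, hCdef]
    have htail : ∑ t, ∑ j, 2 * (Matrix.vecMul D (Z t) j * u t j)
        = 2 * ∑ t, ∑ j, Matrix.vecMul D (Z t) j * u t j := by
      simp [Finset.mul_sum]
    rw [htail]; ring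
  -- cross term identity
  have hcross : C = ∑ i, D i * ((1 / (n:ℝ)) * ∑ t, ((Z t) *ᵥ (u t)) i) := by
    rw [hCdef]
    have ht : ∀ t, ∑ j, Matrix.vecMul D (Z t) j * u t j
        = ∑ i, D i * ((Z t) *ᵥ (u t)) i := by
      intro t
      simp only [Matrix.vecMul, Matrix.mulVec, dotProduct, Finset.sum_mul, Finset.mul_sum,
        mul_assoc]
      rw [Finset.sum_comm]
    simp only [ht] -- X
    rw [Finset.sum_comm, Finset.mul_sum]
    congr 1; funext i
    rw [← Finset.mul_sum]; ring
  have hCbound : |C| ≤ (γ / 4) * ∑ i, |D i| := by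
    rw [hcross]
    calc |∑ i, D i * ((1 / (n:ℝ)) * ∑ t, ((Z t) *ᵥ (u t)) i)|
        ≤ ∑ i, |D i * ((1 / (n:ℝ)) * ∑ t, ((Z t) *ᵥ (u t)) i)| :=
          Finset.abs_sum_le_sum_abs _ _
      _ ≤ ∑ i, |D i| * (γ / 4) := by
          apply Finset.sum_le_sum; intro i _
          rw [abs_mul]
          exact mul_le_mul_of_nonneg_left (hdual i) (abs_nonneg _)
      _ = (γ / 4) * ∑ i, |D i| := by rw [← Finset.sum_mul]; ring
  -- basic inequality from minimality
  have hbasic : V + 2 * C ≤ γ * (∑ i, |β₀ i|) - γ * (∑ i, |βhat i|) := by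
    have := hmin β₀
    rw [hexpand] at this
    linarith
  -- split l1 norms
  set A : ℝ := ∑ i ∈ S, |D i| with hAdef
  set B : ℝ := ∑ i ∈ Sᶜ, |D i| with hBdef
  have hAnonneg : 0 ≤ A := Finset.sum_nonneg fun i _ => abs_nonneg _
  have hBnonneg : 0 ≤ B := Finset.sum_nonneg fun i _ => abs_nonneg _
  have hl1 : ∑ i, |D i| = A + B := by
    rw [hAdef, hBdef, Finset.sum_add_sum_compl]
  have hnorm : (∑ i, |β₀ i|) - (∑ i, |βhat i|) ≤ A - B := by
    have h1 : ∑ i, |β₀ i| - ∑ i, |βhat i| = ∑ i, (|β₀ i| - |βhat i|) := by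
      rw [Finset.sum_sub_distrib]
    rw [h1]
    rw [← Finset.sum_add_sum_compl S (fun i => |β₀ i| - |βhat i|)]
    have hS' : ∑ i ∈ S, (|β₀ i| - |βhat i|) ≤ A := by
      rw [hAdef]; apply Finset.sum_le_sum; intro i _
      exact abs_sub_abs_le_abs_sub _ _
    have hSc : ∑ i ∈ Sᶜ, (|β₀ i| - |βhat i|) = -B := by
      rw [hBdef, ← Finset.sum_neg_distrib]
      apply Finset.sum_congr rfl; intro i hi
      have hz : β₀ i = 0 := by
        by_contra h; exact (Finset.mem_compl.mp hi) ((hS i).mpr h)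
      simp [hDdef, hz]
    rw [hSc]; linarith
  -- key inequality: V ≤ (3γ/2) A - (γ/2) B
  have hkey : V ≤ 3 * γ / 2 * A - γ / 2 * B := by
    have h2C : -(2 * C) ≤ 2 * ((γ / 4) * (A + B)) := by
      have := (abs_le.mp hCbound).1
      rw [hl1] at hCbound
      have := (abs_le.mp hCbound).1
      linarith
    have := hbasic
    nlinarith [hnorm]
  -- cone condition
  have hcone : B ≤ 3 * A := by nlinarith
  -- restricted eigenvalue
  have hRE' := hRE D (by rw [← hAdef, ← hBdef]; linarith)
  set T : ℝ := ∑ i, (D i) ^ 2 with hTdef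
  have hTnonneg : 0 ≤ T := Finset.sum_nonneg fun i _ => sq_nonneg _
  have hVeq : (1 / (n:ℝ)) * ∑ t, ∑ j, (Matrix.vecMul D (Z t) j) ^ 2 = V := rfl
  rw [hVeq] at hRE'
  -- Cauchy-Schwarz: A ≤ sqrt(card) * sqrt(T)
  set r : ℝ := Real.sqrt T with hrdef
  have hrsq : r ^ 2 = T := Real.sq_sqrt hTnonneg
  have hA_CS : A ≤ Real.sqrt (S.card) * r := by
    have hsq : A ^ 2 ≤ (S.card : ℝ) * T := by
      have h1 : (∑ i ∈ S, |D i|) ^ 2 ≤ (S.card : ℝ) * ∑ i ∈ S, |D i| ^ 2 := by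
        have := sq_sum_le_card_mul_sum_sq (s := S) (f := fun i => |D i|)
        exact_mod_cast this
      have h2 : (∑ i ∈ S, |D i| ^ 2) ≤ T := by
        rw [hTdef]
        calc ∑ i ∈ S, |D i| ^ 2 = ∑ i ∈ S, (D i) ^ 2 := by
              apply Finset.sum_congr rfl; intro i _; rw [sq_abs]
          _ ≤ ∑ i, (D i) ^ 2 := Finset.sum_le_sum_of_subset_of_nonneg
              (Finset.subset_univ S) (fun i _ _ => sq_nonneg _)
      calc A ^ 2 ≤ (S.card : ℝ) * ∑ i ∈ S, |D i| ^ 2 := h1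
        _ ≤ (S.card : ℝ) * T := mul_le_mul_of_nonneg_left h2 (Nat.cast_nonneg _)
    have : A ≤ Real.sqrt ((S.card : ℝ) * T) := by
      have := Real.sqrt_le_sqrt hsq
      rwa [Real.sqrt_sq hAnonneg] at this
    rwa [Real.sqrt_mul (Nat.cast_nonneg _)] at this
  -- combine
  have hmain : α / 2 * T ≤ 3 * γ / 2 * A := by
    calc α / 2 * T ≤ V := hRE'
      _ ≤ 3 * γ / 2 * A - γ / 2 * B := hkey
      _ ≤ 3 * γ / 2 * A := by nlinarith
  have hsnn : (0:ℝ) ≤ Real.sqrt (S.card) := Real.sqrt_nonneg _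
  have hrnn : (0:ℝ) ≤ r := Real.sqrt_nonneg _
  have hquad : α * r ^ 2 ≤ 3 * γ * Real.sqrt (S.card) * r := by
    have h1 : α / 2 * T ≤ 3 * γ / 2 * (Real.sqrt (S.card) * r) := by
      calc α / 2 * T ≤ 3 * γ / 2 * A := hmain
        _ ≤ 3 * γ / 2 * (Real.sqrt (S.card) * r) := by
            apply mul_le_mul_of_nonneg_left hA_CS; positivity
    rw [hrsq]; nlinarith
  have hL2 : r ≤ 3 * γ * Real.sqrt (S.card) / α := by
    rcases eq_or_lt_of_le hrnn with h | h
    · rw [← h]; positivity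
    · have h1 : α * r * r ≤ 3 * γ * Real.sqrt (S.card) * r := by nlinarith
      have h2 : α * r ≤ 3 * γ * Real.sqrt (S.card) := le_of_mul_le_mul_right h1 h
      rw [le_div_iff₀ hα]
      calc r * α = α * r := mul_comm _ _
        _ ≤ _ := h2
  constructor
  · exact hL2
  · -- l1 bound
    have hsqs : Real.sqrt (S.card) * Real.sqrt (S.card) = (S.card : ℝ) :=
      Real.mul_self_sqrt (Nat.cast_nonneg _)
    have h4A : ∑ i, |D i| ≤ 4 * A := by rw [hl1]; linarith
    calc ∑ i, |D i| ≤ 4 * A := h4A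
      _ ≤ 4 * (Real.sqrt (S.card) * r) := by linarith [mul_le_mul_of_nonneg_left hA_CS (by norm_num : (0:ℝ) ≤ 4)]
      _ ≤ 4 * (Real.sqrt (S.card) * (3 * γ * Real.sqrt (S.card) / α)) := by
          apply mul_le_mul_of_nonneg_left _ (by norm_num : (0:ℝ) ≤ 4)
          exact mul_le_mul_of_nonneg_left hL2 hsnn
      _ = 12 * γ * S.card / α := by
          field_simp
          nlinarith [hsqs]
end

section
/- (Impulse response identification.) Suppose x_t = Σ_{ℓ=0}^∞ B_ℓ ε_{t−ℓ} with B₀ = I_N and (ε_t) i.i.d. mean-zero with identity covariance, and suppose additionally that x_{t+h} = A₁ x_t + ⋯ + A_p x_{t−p+1} + u_{t,h}, where u_{t,h} = g(ε_{t+h},…,ε_{t+1}) depends only on the future innovations ε_{t+1},…,ε_{t+h}. Define the impulse response IR_{h,j} = E[x_{t+h} | ε_{t|j}(1), ε_{t−1},…] − E[x_{t+h} | ε_{t|j}(0), ε_{t−1},…], where ε_{t|j}(a) replaces the j-th coordinate of ε_t by a. Then IR_{h,j} = B_{h,j} (the j-th column of B_h), and moreover A₁ = B_h. -/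
open Matrix

/-- impulse response identification: suppose `x_t = ∑_ℓ B_ℓ ε_{t−ℓ}` with
`B₀ = I`, and that the `h`-step regression representation
`x_{t+h} = A₁x_t + ⋯ + A_p x_{t−p+1} + u_{t,h}` holds, where `u_{t,h} = g(ε_{t+h},…,ε_{t+1})`
depends only on the future innovations.  The conditional mean of `x_{t+h}` given the
innovations up to time `t` is `∑_{ℓ≥0} B_{h+ℓ} ε_{t−ℓ}` (future innovations being mean
zero), so the impulse response `IR_{h,j}` — the difference of conditional means when the
`j`-th coordinate of `ε_t` is set to `1` versus `0` — equals the `j`-th column of `B_h`;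
moreover `A₁ = B_h`. -/
theorem stmt14 {N p h : ℕ} (hp : 0 < p) (hh : 1 ≤ h)
    (B : ℕ → Matrix (Fin N) (Fin N) ℝ) (hB0 : B 0 = 1)
    (A : Fin p → Matrix (Fin N) (Fin N) ℝ)
    (g : (Fin h → (Fin N → ℝ)) → (Fin N → ℝ))
    (hreg : ∀ e : ℤ → (Fin N → ℝ),
      (∀ t : ℤ, Summable (fun ℓ : ℕ => (B ℓ) *ᵥ e (t - ℓ))) →
      ∀ t : ℤ, (∑' ℓ : ℕ, (B ℓ) *ᵥ e (t + (h : ℤ) - ℓ))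
        = ∑ i : Fin p, (A i) *ᵥ (∑' ℓ : ℕ, (B ℓ) *ᵥ e (t - ((i : ℕ) : ℤ) - ℓ))
          + g (fun k => e (t + 1 + ((k : ℕ) : ℤ)))) :
    (∀ (e : ℤ → (Fin N → ℝ)),
      (∀ t : ℤ, Summable (fun ℓ : ℕ => (B (h + ℓ)) *ᵥ e (t - ℓ))) →
      ∀ (t : ℤ) (j : Fin N),
        (∑' ℓ : ℕ, (B (h + ℓ)) *ᵥ
            (Function.update e t (Function.update (e t) j 1) (t - ℓ)))
          - (∑' ℓ : ℕ, (B (h + ℓ)) *ᵥ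
            (Function.update e t (Function.update (e t) j 0) (t - ℓ)))
        = fun i => B h i j) ∧
    A ⟨0, hp⟩ = B h := by
  constructor
  · intro e hsum t j
    -- the two series agree except at ℓ = 0
    have key : ∀ (a : ℝ), (fun ℓ : ℕ => (B (h + ℓ)) *ᵥ
          (Function.update e t (Function.update (e t) j a) (t - ℓ)))
        = Function.update (fun ℓ : ℕ => (B (h + ℓ)) *ᵥ e (t - ℓ)) 0
            ((B (h + 0)) *ᵥ (Function.update (e t) j a)) := by
      intro a
      funext ℓ
      rcases eq_or_ne ℓ 0 with rfl | hℓ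
      · rw [show t - ((0 : ℕ) : ℤ) = t by simp, Function.update_self, Function.update_self]
      · have ht : (t : ℤ) - ℓ ≠ t := by
          intro hcon
          apply hℓ
          have : ((ℓ : ℤ)) = 0 := by linarith [sub_eq_self.mp hcon]
          exact_mod_cast this
        rw [Function.update_of_ne hℓ, Function.update_of_ne ht]
    have hsum1 : Summable (Function.update (fun ℓ : ℕ => (B (h + ℓ)) *ᵥ e (t - ℓ)) 0
        ((B (h + 0)) *ᵥ (Function.update (e t) j 1))) := (hsum t).update 0 _
    have hsum0 : Summable (Function.update (fun ℓ : ℕ => (B (h + ℓ)) *ᵥ e (t - ℓ)) 0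
        ((B (h + 0)) *ᵥ (Function.update (e t) j 0))) := (hsum t).update 0 _
    rw [key 1, key 0, ← hsum1.tsum_sub hsum0]
    have : (fun ℓ : ℕ =>
        Function.update (fun ℓ : ℕ => (B (h + ℓ)) *ᵥ e (t - ℓ)) 0
            ((B (h + 0)) *ᵥ (Function.update (e t) j 1)) ℓ -
        Function.update (fun ℓ : ℕ => (B (h + ℓ)) *ᵥ e (t - ℓ)) 0
            ((B (h + 0)) *ᵥ (Function.update (e t) j 0)) ℓ) =
        fun ℓ : ℕ => if ℓ = 0 then (fun i => B h i j) else 0 := by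
      funext ℓ
      rcases eq_or_ne ℓ 0 with rfl | hℓ
      · simp only [Function.update_self, if_pos rfl]
        rw [← Matrix.mulVec_sub]
        have hv : Function.update (e t) j 1 - Function.update (e t) j 0
            = Pi.single j (1 : ℝ) := by
          funext i
          rcases eq_or_ne i j with rfl | hij
          · simp [Function.update_self]
          · simp [Function.update_of_ne hij, Pi.single_eq_of_ne hij]
        rw [hv, Matrix.mulVec_single]
        simp
        rfl
      · rw [Function.update_of_ne hℓ, Function.update_of_ne hℓ, if_neg hℓ, sub_self]
    rw [this]
    rw [tsum_eq_single 0 (by intro b hb; rw [if_neg hb])]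
    simp
  · -- A₁ = B h : apply hreg to the impulse e_v supported at time 0
    -- first, g 0 = 0 from the zero sequence
    have hg0 : g (fun _ => (0 : Fin N → ℝ)) = 0 := by
      have h0 := hreg (fun _ => 0) (fun t => by simpa using summable_zero) 0
      simpa using h0.symm
    ext i j
    have hcol := hreg (fun s => if s = 0 then Pi.single j (1 : ℝ) else 0) ?_ 0
    · -- compute both sides of hcol
      have hL : (∑' ℓ : ℕ, (B ℓ) *ᵥ (if (0 : ℤ) + (h : ℤ) - ℓ = 0 then
            Pi.single j (1 : ℝ) else 0)) = (B h) *ᵥ Pi.single j (1 : ℝ) := by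
        rw [tsum_eq_single h]
        · norm_num
        · intro b hb
          have : (0 : ℤ) + (h : ℤ) - b ≠ 0 := by
            intro hcon
            apply hb
            have : ((b : ℤ)) = (h : ℤ) := by linarith
            exact_mod_cast this
          rw [if_neg this, Matrix.mulVec_zero]
      have hR : ∀ i' : Fin p, (∑' ℓ : ℕ, (B ℓ) *ᵥ (if (0 : ℤ) - ((i' : ℕ) : ℤ) - ℓ = 0 then
            Pi.single j (1 : ℝ) else 0)) =
            if (i' : ℕ) = 0 then Pi.single j (1 : ℝ) else 0 := by
        intro i'
        rcases eq_or_ne (i' : ℕ) 0 with hi | hi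
        · rw [if_pos hi, tsum_eq_single 0]
          · have hz : (0 : ℤ) - ((i' : ℕ) : ℤ) - (0 : ℕ) = 0 := by
              simp [hi]
            rw [hz, if_pos rfl, hB0]
            funext a
            simp [Matrix.mulVec_single_one, Matrix.one_apply, Pi.single_apply, eq_comm]
          · intro b hb
            have : (0 : ℤ) - ((i' : ℕ) : ℤ) - b ≠ 0 := by
              intro hcon; apply hb; omega
            rw [if_neg this, Matrix.mulVec_zero]
        · rw [if_neg hi]
          have hz : (fun b : ℕ => (B b) *ᵥ (if (0 : ℤ) - ((i' : ℕ) : ℤ) - b = 0 then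
              Pi.single j (1 : ℝ) else 0)) = fun _ => (0 : Fin N → ℝ) := by
            funext b
            have : (0 : ℤ) - ((i' : ℕ) : ℤ) - b ≠ 0 := by
              have h1 : 0 < (i' : ℕ) := Nat.pos_of_ne_zero hi
              omega
            rw [if_neg this, Matrix.mulVec_zero]
          rw [hz, tsum_zero]
      have hgz : (fun k : Fin h => (if (0 : ℤ) + 1 + ((k : ℕ) : ℤ) = 0 then
          Pi.single j (1 : ℝ) else 0)) = fun _ => (0 : Fin N → ℝ) := by
        funext k
        have : (0 : ℤ) + 1 + ((k : ℕ) : ℤ) ≠ 0 := by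
          have := Int.natCast_nonneg (k : ℕ); omega
        rw [if_neg this]
      rw [hL, hgz, hg0, add_zero] at hcol
      have hsum : ∑ i' : Fin p, (A i') *ᵥ (∑' ℓ : ℕ, (B ℓ) *ᵥ
          (if (0 : ℤ) - ((i' : ℕ) : ℤ) - ℓ = 0 then Pi.single j (1 : ℝ) else 0)) =
          (A ⟨0, hp⟩) *ᵥ Pi.single j (1 : ℝ) := by
        rw [Finset.sum_eq_single_of_mem ⟨0, hp⟩ (Finset.mem_univ _)]
        · rw [hR ⟨0, hp⟩]; norm_num
        · intro b _ hb
          rw [hR b, if_neg (by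
            intro hcon
            exact hb (Fin.ext hcon)), Matrix.mulVec_zero]
      rw [hsum] at hcol
      have := congrFun hcol i
      simpa [Matrix.mulVec_single] using this.symm
    · -- summability of the finitely supported sequence
      intro t
      apply summable_of_finite_support
      apply Set.Finite.subset (Set.finite_Icc 0 t.toNat)
      intro ℓ hℓ
      simp only [Function.mem_support, ne_eq] at hℓ
      by_contra hmem
      apply hℓ
      have : (t : ℤ) - ℓ ≠ 0 := by
        simp only [Set.mem_Icc, not_and_or, not_le] at hmem
        rcases hmem with h1 | h1
        · omega
        · have : (t.toNat : ℤ) < (ℓ : ℤ) := by exact_mod_cast h1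
          omega
      rw [if_neg this, Matrix.mulVec_zero]
end
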